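/- Consider a generative predictive coding network with layers l = 0,…,L. For every layer l with 0 < l ≤ L and every index i with 1 ≤ i ≤ n_l, the partial derivative of the energy E with respect to the value node x^l_i equals ε^l_i − f'(x^l_i) · Σ_{k=1}^{n_{l−1}} ε^{l−1}_k · θ^l_{k,i}; consequently the inference update Δx^l_i = −γ · ∂E/∂x^l_i is γ·( −ε^l_i + f'(x^l_i) Σ_{k=1}^{n_{l−1}} ε^{l−1}_k θ^l_{k,i} ). -/

import Mathlib

/-- In a generative predictive coding network with layers `0,…,L`,
for every layer `0 < l ≤ L` and every index `i < n l`, the partial derivative of the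
energy `E` with respect to the value node `x^l_i` equals
`ε^l_i − f'(x^l_i) · Σ_k ε^{l−1}_k · θ^l_{k,i}`; consequently the inference update
`Δx^l_i = −γ · ∂E/∂x^l_i` equals `γ·(−ε^l_i + f'(x^l_i) Σ_k ε^{l−1}_k θ^l_{k,i})`. -/
theorem pcn_inference_update
    (L : ℕ) (n : ℕ → ℕ)
    (x : ℕ → ℕ → ℝ)               -- value nodes: `x l i` is `x^l_i`
    (θ : ℕ → ℕ → ℕ → ℝ)           -- weights: `θ l k i` is `θ^l_{k,i}` (layer `l` to layer `l-1`)
    (b : ℕ → ℝ)                    -- memory vector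
    (f f' : ℝ → ℝ) (hf : ∀ y : ℝ, HasDerivAt f (f' y) y)
    (μ ε : ℕ → ℕ → ℝ)
    (hμ : ∀ l i, μ l i =
      if l = L then b i
      else ∑ j ∈ Finset.range (n (l + 1)), θ (l + 1) i j * f (x (l + 1) j))
    (hε : ∀ l i, ε l i = x l i - μ l i)
    (E : (ℕ → ℕ → ℝ) → ℝ)
    (hE : ∀ y : ℕ → ℕ → ℝ, E y =
      (1 / 2) * ∑ l ∈ Finset.range (L + 1), ∑ i ∈ Finset.range (n l),
        (y l i - (if l = L then b i
          else ∑ j ∈ Finset.range (n (l + 1)), θ (l + 1) i j * f (y (l + 1) j))) ^ 2)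
    (l i : ℕ) (hl0 : 0 < l) (hlL : l ≤ L) (hi : i < n l) (γ : ℝ) :
    HasDerivAt (fun t : ℝ => E (fun l' i' => if l' = l ∧ i' = i then t else x l' i'))
      (ε l i - f' (x l i) * ∑ k ∈ Finset.range (n (l - 1)), ε (l - 1) k * θ l k i)
      (x l i)
    ∧ -γ * (ε l i - f' (x l i) * ∑ k ∈ Finset.range (n (l - 1)), ε (l - 1) k * θ l k i)
      = γ * (-ε l i + f' (x l i) * ∑ k ∈ Finset.range (n (l - 1)), ε (l - 1) k * θ l k i) := by

  have hl1 : l - 1 + 1 = l := by omega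
  have hlL' : l - 1 ≠ L := by omega
  have hll : l - 1 ≠ l := by omega
  constructor
  · -- the derivative computation
    have hterm : ∀ l' ∈ Finset.range (L+1), ∀ i' ∈ Finset.range (n l'),
        HasDerivAt (fun t : ℝ =>
          ((if l' = l ∧ i' = i then t else x l' i') -
            (if l' = L then b i'
             else ∑ j ∈ Finset.range (n (l'+1)), θ (l'+1) i' j *
               f (if l'+1 = l ∧ j = i then t else x (l'+1) j))) ^ 2)
          ((if l' = l ∧ i' = i then 2 * ε l i else 0)
            + (if l' = l - 1 then 2 * ε (l-1) i' * (-(f' (x l i) * θ l i' i)) else 0))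
          (x l i) := by
      intro l' _ i' _
      by_cases h1 : l' = l
      · simp only [h1]
        simp only [show (l + 1 = l) = False from by simp, false_and, if_false,
          if_neg hll.symm, add_zero]
        by_cases h3 : i' = i
        · subst h3
          simp only [and_self, if_pos rfl, true_and]
          have hC : (if l = L then b i' else
              ∑ j ∈ Finset.range (n (l+1)), θ (l+1) i' j * f (x (l+1) j)) = μ l i' :=
            (hμ l i').symm
          rw [hC]
          have h : HasDerivAt (fun t : ℝ => (t - μ l i') ^ 2)
              (2 * (x l i' - μ l i')) (x l i') :=
            by simpa using ((hasDerivAt_id (x l i')).sub_const (μ l i')).fun_pow 2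
          refine h.congr_deriv (Eq.symm ?_)
          simp only [if_pos trivial, ↓reduceIte, hε]
        · simp only [h3, and_false, if_false]
          exact hasDerivAt_const _ _
      · by_cases h2 : l' = l - 1
        · subst h2
          simp only [iff_false_intro hll, false_and, if_false, if_neg hlL', hl1,
            eq_self_iff_true, true_and, if_true, zero_add]
          have hS : HasDerivAt (fun t : ℝ => ∑ j ∈ Finset.range (n l),
                θ l i' j * f (if j = i then t else x l j))
              (∑ j ∈ Finset.range (n l),
                (if j = i then θ l i' i * f' (x l i) else 0)) (x l i) := by
            apply HasDerivAt.fun_sum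
            intro j _
            by_cases h4 : j = i
            · subst h4
              simp only [if_pos rfl]
              exact (hf (x l j)).const_mul _
            · simp only [if_neg h4]
              exact hasDerivAt_const _ _
          have hSval : (∑ j ∈ Finset.range (n l),
              (if j = i then θ l i' i * f' (x l i) else 0)) = θ l i' i * f' (x l i) := by
            rw [Finset.sum_ite_eq' (Finset.range (n l)) i
              (fun _ => θ l i' i * f' (x l i))]
            simp [Finset.mem_range.mpr hi]
          rw [hSval] at hS
          have h := (hS.const_sub (x (l-1) i')).fun_pow 2
          refine h.congr_deriv (Eq.symm ?_)
          have hμval : (∑ j ∈ Finset.range (n l),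
              θ l i' j * f (if j = i then x l i else x l j)) = μ (l-1) i' := by
            rw [hμ, if_neg hlL', hl1]
            apply Finset.sum_congr rfl
            intro j _
            by_cases h4 : j = i
            · subst h4; simp
            · simp [h4]
          rw [hμval, hε]
          ring
        · have h5 : (l' + 1 = l) ↔ False := iff_false_intro (fun h => h2 (by omega))
          simp only [iff_false_intro h1, iff_false_intro h2, false_and, if_false, add_zero, h5]
          exact hasDerivAt_const _ _
    have hmain := HasDerivAt.const_mul ((1:ℝ)/2)
      (HasDerivAt.fun_sum (fun l' hl' => HasDerivAt.fun_sum (fun i' hi' => hterm l' hl' i' hi')))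
    have hfun : (fun t : ℝ => E (fun l' i' => if l' = l ∧ i' = i then t else x l' i'))
        = (fun t : ℝ => (1/2 : ℝ) * ∑ l' ∈ Finset.range (L + 1), ∑ i' ∈ Finset.range (n l'),
          ((if l' = l ∧ i' = i then t else x l' i') -
            (if l' = L then b i'
             else ∑ j ∈ Finset.range (n (l'+1)), θ (l'+1) i' j *
               f (if l'+1 = l ∧ j = i then t else x (l'+1) j))) ^ 2) := by
      funext t
      rw [hE]
    rw [hfun]
    refine hmain.congr_deriv (Eq.symm ?_)
    -- value of the derivative
    have hsplit : ∀ l' ∈ Finset.range (L+1),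
        (∑ i' ∈ Finset.range (n l'),
          ((if l' = l ∧ i' = i then 2 * ε l i else 0)
            + (if l' = l - 1 then 2 * ε (l-1) i' * (-(f' (x l i) * θ l i' i)) else 0)))
        = (∑ i' ∈ Finset.range (n l'), (if l' = l ∧ i' = i then 2 * ε l i else 0))
          + (∑ i' ∈ Finset.range (n l'),
              (if l' = l - 1 then 2 * ε (l-1) i' * (-(f' (x l i) * θ l i' i)) else 0)) := by
      intro l' _
      exact Finset.sum_add_distrib
    rw [Finset.sum_congr rfl hsplit, Finset.sum_add_distrib]
    have hA : (∑ l' ∈ Finset.range (L+1), ∑ i' ∈ Finset.range (n l'),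
        (if l' = l ∧ i' = i then 2 * ε l i else 0)) = 2 * ε l i := by
      rw [Finset.sum_eq_single l]
      · rw [Finset.sum_eq_single i]
        · simp
        · intro j _ hj; simp [hj]
        · intro h; exact absurd (Finset.mem_range.mpr hi) h
      · intro l'' _ hl''; apply Finset.sum_eq_zero; intro j _; simp [hl'']
      · intro h; exact absurd (Finset.mem_range.mpr (by omega)) h
    have hB : (∑ l' ∈ Finset.range (L+1), ∑ i' ∈ Finset.range (n l'),
        (if l' = l - 1 then 2 * ε (l-1) i' * (-(f' (x l i) * θ l i' i)) else 0))
        = ∑ i' ∈ Finset.range (n (l-1)), 2 * ε (l-1) i' * (-(f' (x l i) * θ l i' i)) := by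
      rw [Finset.sum_eq_single (l-1)]
      · simp
      · intro l'' _ hl''; apply Finset.sum_eq_zero; intro j _; simp [hl'']
      · intro h; exact absurd (Finset.mem_range.mpr (by omega)) h
    rw [hA, hB, mul_add, Finset.mul_sum, sub_eq_add_neg, Finset.mul_sum,
      ← Finset.sum_neg_distrib]
    congr 1
    · ring
    · exact Finset.sum_congr rfl fun k _ => by ring
  · ring
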